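/- Let p be an odd prime, r ≥ 1, and let e be a positive integer divisible by p-1 with e ≥ r. Then ∑_{j=1}^{p^r - 1} j^e ≡ φ(p^r) ≡ -p^{r-1} (mod p^r). -/

import Mathlib

open Finset

/-- The Carmichael function: exponent of the unit group of `ZMod n`. -/
noncomputable def carmichael (n : ℕ) : ℕ := Monoid.exponent (ZMod n)ˣ

/-- `n` is composite. -/
def Composite (n : ℕ) : Prop := 2 ≤ n ∧ ¬ n.Prime

/-- `n` is a Giuga number. -/
def IsGiuga (n : ℕ) : Prop :=
  Composite n ∧ ∀ p : ℕ, p.Prime → p ∣ n → p ∣ (n / p - 1)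

/-- Binomial expansion when `y` squares to zero. -/
lemma add_pow_sq_zero {R : Type*} [CommRing R] (x y : R) (h : y * y = 0) :
    ∀ n : ℕ, (x + y) ^ (n + 1) = x ^ (n + 1) + ((n : R) + 1) * x ^ n * y := by
  intro n
  induction n with
  | zero => push_cast; ring
  | succ n ih =>
    have hy : y ^ 2 = 0 := by rw [sq]; exact h
    have hstep : (x + y) ^ (n + 2) = (x + y) ^ (n + 1) * (x + y) := by ring
    rw [hstep, ih]
    push_cast
    ring_nf
    simp [hy]

/-- Decompose a sum over `range (m * n)`. -/
lemma sum_range_mul_decomp {M : Type*} [AddCommMonoid M] (f : ℕ → M) (m : ℕ) :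
    ∀ n : ℕ, ∑ j ∈ range (m * n), f j = ∑ b ∈ range n, ∑ a ∈ range m, f (m * b + a) := by
  intro n
  induction n with
  | zero => simp
  | succ n ih =>
    calc ∑ j ∈ range (m * (n + 1)), f j
        = ∑ j ∈ Ico 0 (m * n), f j + ∑ j ∈ Ico (m * n) (m * n + m), f j := by
          rw [Finset.sum_Ico_consecutive f (Nat.zero_le _) (Nat.le_add_right _ m),
            ← Finset.range_eq_Ico, Nat.mul_succ]
      _ = ∑ j ∈ range (m * n), f j + ∑ a ∈ range m, f (m * n + a) := by
          rw [← Finset.range_eq_Ico, Finset.sum_Ico_eq_sum_range]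
          simp
      _ = ∑ b ∈ range (n + 1), ∑ a ∈ range m, f (m * b + a) := by
          rw [ih, Finset.sum_range_succ]

lemma key_sum (p e : ℕ) (hp : p.Prime) (hodd : Odd p) (he : 0 < e) (hdvd : (p - 1) ∣ e) :
    ∀ r : ℕ, 1 ≤ r → (∑ j ∈ range (p ^ r), j ^ e) ≡ p ^ (r - 1) * (p - 1) [MOD p ^ r] := by
  have hp2 : 2 ≤ p := hp.two_le
  intro r hr
  induction r, hr using Nat.le_induction with
  | base =>
    haveI : Fact p.Prime := ⟨hp⟩
    have h1 : p ^ 1 = p := pow_one p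
    have h0' : p ^ (1 - 1) * (p - 1) = p - 1 := by simp
    rw [h1, h0', ← ZMod.natCast_eq_natCast_iff, Nat.cast_sum]
    simp only [Nat.cast_pow]
    obtain ⟨p', rfl⟩ : ∃ p', p = p' + 1 := ⟨p - 1, by omega⟩
    rw [Finset.sum_range_succ']
    simp only [Nat.cast_zero, zero_pow he.ne', add_zero]
    have hone : ∀ i ∈ range p', ((i + 1 : ℕ) : ZMod (p' + 1)) ^ e = 1 := by
      intro i hi
      simp only [Finset.mem_range] at hi
      have hne : ((i + 1 : ℕ) : ZMod (p' + 1)) ≠ 0 := by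
        rw [Ne, ZMod.natCast_eq_zero_iff]
        intro hdvd'
        have := Nat.le_of_dvd (by omega) hdvd'
        omega
      obtain ⟨t, rfl⟩ := hdvd
      have hbase : ((i + 1 : ℕ) : ZMod (p' + 1)) ^ (p' + 1 - 1) = 1 :=
        ZMod.pow_card_sub_one_eq_one hne
      rw [pow_mul, hbase, one_pow]
    rw [Finset.sum_congr rfl hone, Finset.sum_const, Finset.card_range, nsmul_eq_mul, mul_one]
    simp
  | succ r hr ih =>
    obtain ⟨e', rfl⟩ : ∃ e', e = e' + 1 := ⟨e - 1, by omega⟩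
    have hmain : ((∑ j ∈ range (p ^ (r + 1)), j ^ (e' + 1) : ℕ) : ZMod (p ^ (r + 1))) =
        ((p * ∑ a ∈ range (p ^ r), a ^ (e' + 1) : ℕ) : ZMod (p ^ (r + 1))) := by
      push_cast
      rw [pow_succ]
      -- now everything is at modulus p ^ r * p
      rw [sum_range_mul_decomp (fun j => (j : ZMod (p ^ r * p)) ^ (e' + 1)) (p ^ r) p]
      push_cast
      have hPP : ((p : ZMod (p ^ r * p))) ^ r * ((p : ZMod (p ^ r * p))) ^ r = 0 := by
        rw [← pow_add, ← Nat.cast_pow, ZMod.natCast_eq_zero_iff]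
        refine ⟨p ^ (r - 1), ?_⟩
        rw [← pow_succ, ← pow_add]
        congr 1
        omega
      have hsq : ∀ b : ℕ,
          ((p : ZMod (p ^ r * p)) ^ r * (b : ZMod (p ^ r * p))) *
            ((p : ZMod (p ^ r * p)) ^ r * (b : ZMod (p ^ r * p))) = 0 := by
        intro b
        calc ((p : ZMod (p^r*p)) ^ r * b) * ((p : ZMod (p^r*p)) ^ r * b)
            = ((p : ZMod (p^r*p)) ^ r * (p : ZMod (p^r*p)) ^ r) * (b * b) := by ring
          _ = 0 := by rw [hPP, zero_mul]
      have hzero : ((p : ZMod (p ^ r * p)) ^ r) *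
          (∑ b ∈ range p, (b : ZMod (p ^ r * p))) = 0 := by
        rw [← Nat.cast_sum, ← Nat.cast_pow, ← Nat.cast_mul, ZMod.natCast_eq_zero_iff]
        obtain ⟨k, hk⟩ : ∃ k, p - 1 = 2 * k := by
          obtain ⟨m, hm⟩ := hodd
          exact ⟨m, by omega⟩
        have hsum2 : (∑ b ∈ range p, b) * 2 = p * (p - 1) := Finset.sum_range_id_mul_two p
        have hsum : (∑ b ∈ range p, b) = p * k := by
          have : (∑ b ∈ range p, b) * 2 = (p * k) * 2 := by rw [hsum2, hk]; ring
          omega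
        rw [hsum]
        exact ⟨k, by ring⟩
      have hrow : ∀ b ∈ range p,
          ∑ a ∈ range (p ^ r), ((p : ZMod (p ^ r * p)) ^ r * b + a) ^ (e' + 1) =
          ∑ a ∈ range (p ^ r), ((a : ZMod (p ^ r * p)) ^ (e' + 1) +
            ((e' : ZMod (p ^ r * p)) + 1) * (a : ZMod (p ^ r * p)) ^ e' *
              ((p : ZMod (p ^ r * p)) ^ r * b)) := by
        intro b _
        refine Finset.sum_congr rfl fun a _ => ?_
        rw [add_comm ((p : ZMod (p ^ r * p)) ^ r * (b : ZMod (p ^ r * p)))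
          (a : ZMod (p ^ r * p))]
        exact add_pow_sq_zero _ _ (hsq b) e'
      rw [Finset.sum_congr rfl hrow, Finset.sum_comm]
      have hcol : ∀ a ∈ range (p ^ r),
          ∑ b ∈ range p, ((a : ZMod (p ^ r * p)) ^ (e' + 1) +
            ((e' : ZMod (p ^ r * p)) + 1) * (a : ZMod (p ^ r * p)) ^ e' *
              ((p : ZMod (p ^ r * p)) ^ r * b)) =
          (p : ZMod (p ^ r * p)) * (a : ZMod (p ^ r * p)) ^ (e' + 1) := by
        intro a _
        rw [Finset.sum_add_distrib, Finset.sum_const, Finset.card_range, nsmul_eq_mul]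
        have hpull : ∑ b ∈ range p,
            (((e' : ZMod (p ^ r * p)) + 1) * (a : ZMod (p ^ r * p)) ^ e' *
              ((p : ZMod (p ^ r * p)) ^ r * b)) =
            ((e' : ZMod (p ^ r * p)) + 1) * (a : ZMod (p ^ r * p)) ^ e' *
              ((p : ZMod (p ^ r * p)) ^ r * ∑ b ∈ range p, (b : ZMod (p ^ r * p))) := by
          rw [Finset.mul_sum, Finset.mul_sum]
        rw [hpull, hzero, mul_zero, add_zero]
      rw [Finset.sum_congr rfl hcol, ← Finset.mul_sum]
    have hmod1 : (∑ j ∈ range (p ^ (r + 1)), j ^ (e' + 1)) ≡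
        p * ∑ a ∈ range (p ^ r), a ^ (e' + 1) [MOD p ^ (r + 1)] :=
      (ZMod.natCast_eq_natCast_iff _ _ _).mp hmain
    have hmod2 : p * (∑ a ∈ range (p ^ r), a ^ (e' + 1)) ≡
        p * (p ^ (r - 1) * (p - 1)) [MOD p * p ^ r] :=
      Nat.ModEq.mul_left' p ih
    have h1 : p * (p ^ (r - 1) * (p - 1)) = p ^ r * (p - 1) := by
      rw [← mul_assoc, ← pow_succ']
      congr 2
      omega
    have h2 : p * p ^ r = p ^ (r + 1) := by ring
    rw [h1, h2] at hmod2
    have : (r + 1 - 1) = r := by omega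
    rw [this]
    exact hmod1.trans hmod2

theorem powerSum_primePow (p r e : ℕ) (hp : p.Prime) (hodd : Odd p)
    (hr : 1 ≤ r) (he : 0 < e) (hdvd : (p - 1) ∣ e) (her : r ≤ e) :
    (∑ j ∈ Finset.Ico 1 (p ^ r), (j : ZMod (p ^ r)) ^ e)
        = (Nat.totient (p ^ r) : ZMod (p ^ r)) ∧
      (Nat.totient (p ^ r) : ZMod (p ^ r)) = -(p ^ (r - 1) : ℕ) := by
  have hp2 : 2 ≤ p := hp.two_le
  have htot : Nat.totient (p ^ r) = p ^ (r - 1) * (p - 1) := Nat.totient_prime_pow hp hr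
  have hppos : 0 < p ^ r := Nat.pow_pos (n := r) (by omega)
  constructor
  · have key := key_sum p e hp hodd he hdvd r hr
    have hcast : ((∑ j ∈ range (p ^ r), j ^ e : ℕ) : ZMod (p ^ r)) =
        ((p ^ (r - 1) * (p - 1) : ℕ) : ZMod (p ^ r)) :=
      (ZMod.natCast_eq_natCast_iff _ _ _).mpr key
    rw [htot, ← hcast, Nat.cast_sum]
    simp only [Nat.cast_pow]
    rw [Finset.range_eq_Ico, Finset.sum_eq_sum_Ico_succ_bot hppos]
    simp [zero_pow he.ne']
  · rw [htot]
    refine eq_neg_of_add_eq_zero_left ?_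
    rw [← Nat.cast_add, ZMod.natCast_eq_zero_iff]
    have hfin : p ^ (r - 1) * (p - 1) + p ^ (r - 1) = p ^ r := by
      have h1 : p ^ (r - 1) * (p - 1) + p ^ (r - 1) = p ^ (r - 1) * p := by
        have hp1 : p - 1 + 1 = p := by omega
        calc p ^ (r - 1) * (p - 1) + p ^ (r - 1) = p ^ (r - 1) * ((p - 1) + 1) := by ring
          _ = p ^ (r - 1) * p := by rw [hp1]
      rw [h1, ← pow_succ]
      congr 1
      omega
    rw [hfin]
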